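/- Let g : ℂ³ → ℂ be the map g(z₁,z₂,z₃) = z₁·conj(z₂) + z₁z₃ + conj(z₂)·z₃ (which is smooth as a map of real vector spaces but not holomorphic). Then: (a) the real Fréchet derivative fderiv ℝ g z vanishes if and only if z = 0; and (b) for every z ≠ 0, the ℝ-linear map fderiv ℝ g z : ℂ³ → ℂ is surjective. In particular every nonzero point of the zero set V = g⁻¹(0) is a regular point of g, so V ∖ {0} is cut out transversally. -/
import Mathlib

open Complex

/-- The real-analytic (non-holomorphic) polynomial
`g(z₁,z₂,z₃) = z₁·conj z₂ + z₁z₃ + conj z₂ · z₃` has an isolated singularity at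
the origin and is a submersion away from it. -/
theorem regularity_of_g
    (g : (Fin 3 → ℂ) → ℂ)
    (hg : ∀ z, g z = z 0 * starRingEnd ℂ (z 1) + z 0 * z 2
      + starRingEnd ℂ (z 1) * z 2) :
    (∀ z : Fin 3 → ℂ, fderiv ℝ g z = 0 ↔ z = 0) ∧
    (∀ z : Fin 3 → ℂ, z ≠ 0 → Function.Surjective (fderiv ℝ g z)) := by
  have hgfun : g = fun z => z 0 * starRingEnd ℂ (z 1) + z 0 * z 2
      + starRingEnd ℂ (z 1) * z 2 := funext hg
  set P0 : (Fin 3 → ℂ) →L[ℝ] ℂ := ContinuousLinearMap.proj (R := ℝ) (φ := fun _ : Fin 3 => ℂ) 0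
  set P2 : (Fin 3 → ℂ) →L[ℝ] ℂ := ContinuousLinearMap.proj (R := ℝ) (φ := fun _ : Fin 3 => ℂ) 2
  set Q1 : (Fin 3 → ℂ) →L[ℝ] ℂ :=
    Complex.conjCLE.toContinuousLinearMap ∘L ContinuousLinearMap.proj (R := ℝ) (φ := fun _ : Fin 3 => ℂ) 1
  have key : ∀ z : Fin 3 → ℂ, HasFDerivAt g
      ((P0 z • Q1 + Q1 z • P0) + (P0 z • P2 + P2 z • P0) + (Q1 z • P2 + P2 z • Q1)) z := by
    intro z
    rw [hgfun]
    exact (((P0.hasFDerivAt (x := z)).mul (Q1.hasFDerivAt)).add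
        ((P0.hasFDerivAt (x := z)).mul (P2.hasFDerivAt))).add
        ((Q1.hasFDerivAt (x := z)).mul (P2.hasFDerivAt))
  have hD : ∀ z w : Fin 3 → ℂ, fderiv ℝ g z w =
      (starRingEnd ℂ (z 1) + z 2) * w 0 + (z 0 + z 2) * starRingEnd ℂ (w 1)
        + (z 0 + starRingEnd ℂ (z 1)) * w 2 := by
    intro z w
    rw [(key z).fderiv]
    simp [P0, P2, Q1, Complex.conjCLE, smul_eq_mul]
    ring
  have hcoef : ∀ z : Fin 3 → ℂ,
      (starRingEnd ℂ (z 1) + z 2 = 0 ∧ z 0 + z 2 = 0 ∧ z 0 + starRingEnd ℂ (z 1) = 0)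
        → z = 0 := by
    intro z ⟨ha, hb, hc⟩
    have h0 : z 0 = 0 := by linear_combination (hb + hc - ha) / 2
    have h2 : z 2 = 0 := by linear_combination hb - h0
    have h1 : starRingEnd ℂ (z 1) = 0 := by linear_combination hc - h0
    have h1' : z 1 = 0 := by
      have := congrArg (starRingEnd ℂ) h1; simpa using this
    funext i; fin_cases i <;> simp [h0, h1', h2]
  have hiff : ∀ z : Fin 3 → ℂ, fderiv ℝ g z = 0 ↔ z = 0 := by
    intro z
    constructor
    · intro h
      apply hcoef
      have e0 := hD z (Pi.single 0 1)
      have e1 := hD z (Pi.single 1 1)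
      have e2 := hD z (Pi.single 2 1)
      rw [h] at e0 e1 e2
      simp [Pi.single_apply] at e0 e1 e2
      exact ⟨e0.symm, e1.symm, e2.symm⟩
    · rintro rfl
      ext w
      simp [hD]
  refine ⟨hiff, fun z hz y => ?_⟩
  have hne : ¬ (starRingEnd ℂ (z 1) + z 2 = 0 ∧ z 0 + z 2 = 0 ∧ z 0 + starRingEnd ℂ (z 1) = 0) :=
    fun h => hz (hcoef z h)
  by_cases ha : starRingEnd ℂ (z 1) + z 2 = 0
  · by_cases hb : z 0 + z 2 = 0
    · have hc : z 0 + starRingEnd ℂ (z 1) ≠ 0 := fun hc => hne ⟨ha, hb, hc⟩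
      refine ⟨Pi.single 2 ((z 0 + starRingEnd ℂ (z 1))⁻¹ * y), ?_⟩
      rw [hD]
      simp [Pi.single_apply]
      field_simp
    · refine ⟨Pi.single 1 (starRingEnd ℂ ((z 0 + z 2)⁻¹ * y)), ?_⟩
      rw [hD]
      simp [Pi.single_apply]
      field_simp
  · refine ⟨Pi.single 0 ((starRingEnd ℂ (z 1) + z 2)⁻¹ * y), ?_⟩
    rw [hD]
    simp [Pi.single_apply]
    field_simp
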